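/- The polynomial complex RT ⊂ P_{k+1}(K;ℝ²) →(sym curl) P_k(K;S) →(div div) P_{k−2}(K) → 0 is exact for k ≥ 3; in particular sym curl maps P_{k+1}(K;ℝ²) onto the kernel of div div in P_k(K;S), div div maps P_k(K;S) onto P_{k−2}(K), and the kernel of sym curl in P_{k+1}(K;ℝ²) equals the lowest-order Raviart–Thomas space RT. -/

import Mathlib

open MvPolynomial Finsupp

lemma coeff_pderiv' (i : Fin 2) (p : MvPolynomial (Fin 2) ℝ) (n : Fin 2 →₀ ℕ) :
    coeff n (pderiv i p) = ((n i : ℝ) + 1) * coeff (n + Finsupp.single i 1) p := by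
  induction p using MvPolynomial.induction_on' with
  | monomial m a =>
    rw [pderiv_monomial, coeff_monomial, coeff_monomial]
    by_cases h2 : m = n + Finsupp.single i 1
    · have hm : m - Finsupp.single i 1 = n := by
        rw [h2]; exact add_tsub_cancel_right _ _
      have hmi : m i = n i + 1 := by
        rw [h2]; simp
      rw [if_pos hm, if_pos h2, hmi]
      push_cast; ring
    · rw [if_neg h2]
      by_cases h1 : m - Finsupp.single i 1 = n
      · rw [if_pos h1]
        have hmi : m i = 0 := by
          by_contra hmi
          apply h2
          rw [← h1, tsub_add_cancel_of_le]
          rwa [Finsupp.single_le_iff, Nat.one_le_iff_ne_zero]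
        rw [hmi]; push_cast; ring
      · rw [if_neg h1]; ring
  | add p q hp hq =>
    simp [hp, hq, mul_add]

lemma pderiv_eq_zero_iff' (i : Fin 2) (p : MvPolynomial (Fin 2) ℝ) :
    pderiv i p = 0 ↔ ∀ m : Fin 2 →₀ ℕ, m i ≠ 0 → coeff m p = 0 := by
  constructor
  · intro h m hmi
    have := congrArg (coeff (m - Finsupp.single i 1)) h
    rw [coeff_pderiv', coeff_zero, tsub_add_cancel_of_le
      (by rwa [Finsupp.single_le_iff, Nat.one_le_iff_ne_zero])] at this
    have hne : (((m - Finsupp.single i 1 : Fin 2 →₀ ℕ)) i : ℝ) + 1 ≠ 0 := by positivity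
    exact (mul_eq_zero.1 this).resolve_left hne
  · intro h
    ext n
    rw [coeff_pderiv', coeff_zero, h _ (by simp), mul_zero]

lemma pderiv_comm' (i j : Fin 2) (p : MvPolynomial (Fin 2) ℝ) :
    pderiv i (pderiv j p) = pderiv j (pderiv i p) := by
  rcases eq_or_ne i j with rfl | hij
  · rfl
  · ext n
    rw [coeff_pderiv', coeff_pderiv', coeff_pderiv', coeff_pderiv']
    have h1 : ((n + Finsupp.single i 1 : Fin 2 →₀ ℕ)) j = n j := by
      simp [Finsupp.single_apply_eq_zero, hij.symm]
    have h2 : ((n + Finsupp.single j 1 : Fin 2 →₀ ℕ)) i = n i := by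
      simp [Finsupp.single_apply_eq_zero, hij]
    rw [h1, h2, add_right_comm]
    ring

lemma eq_C_of_pderiv_zero (p : MvPolynomial (Fin 2) ℝ)
    (h0 : pderiv 0 p = 0) (h1 : pderiv 1 p = 0) : p = C (coeff 0 p) := by
  ext n
  rw [coeff_C]
  split_ifs with h
  · rw [← h]
  · rcases eq_or_ne (n 0) 0 with hn0 | hn0
    · rcases eq_or_ne (n 1) 0 with hn1 | hn1
      · exact absurd (Finsupp.ext fun a => by fin_cases a <;> simpa) (Ne.symm h)
      · exact (pderiv_eq_zero_iff' 1 p).1 h1 n hn1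
    · exact (pderiv_eq_zero_iff' 0 p).1 h0 n hn0

noncomputable def integ (i : Fin 2) (p : MvPolynomial (Fin 2) ℝ) : MvPolynomial (Fin 2) ℝ :=
  ∑ m ∈ p.support, monomial (m + Finsupp.single i 1) (coeff m p / ((m i : ℝ) + 1))

lemma coeff_integ (i : Fin 2) (p : MvPolynomial (Fin 2) ℝ) (n : Fin 2 →₀ ℕ) :
    coeff n (integ i p) =
      if n i = 0 then 0 else coeff (n - Finsupp.single i 1) p / (n i : ℝ) := by
  rw [integ, coeff_sum]
  simp_rw [coeff_monomial]
  split_ifs with h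
  · apply Finset.sum_eq_zero
    intro m _
    rw [if_neg]
    intro he
    have : ((m + Finsupp.single i 1 : Fin 2 →₀ ℕ)) i = n i := by rw [he]
    simp [h] at this
  · have key : ∀ m : Fin 2 →₀ ℕ, (m + Finsupp.single i 1 = n) ↔ m = n - Finsupp.single i 1 := by
      intro m
      constructor
      · rintro rfl; exact (add_tsub_cancel_right _ _).symm
      · rintro rfl
        exact tsub_add_cancel_of_le (by rwa [Finsupp.single_le_iff, Nat.one_le_iff_ne_zero])
    simp_rw [key]
    rw [Finset.sum_ite_eq' p.support (n - Finsupp.single i 1)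
      (fun m => coeff m p / ((m i : ℝ) + 1))]
    have hsub : (((n - Finsupp.single i 1 : Fin 2 →₀ ℕ)) i : ℝ) + 1 = (n i : ℝ) := by
      rw [Finsupp.tsub_apply, Finsupp.single_apply, if_pos rfl]
      have hni : n i - 1 + 1 = n i := Nat.succ_pred_eq_of_pos (Nat.pos_of_ne_zero h)
      exact_mod_cast congrArg (Nat.cast : ℕ → ℝ) hni
    split_ifs with hm
    · rw [hsub]
    · rw [MvPolynomial.notMem_support_iff.1 hm, zero_div]

lemma pderiv_integ (i : Fin 2) (p : MvPolynomial (Fin 2) ℝ) :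
    pderiv i (integ i p) = p := by
  ext n
  rw [coeff_pderiv', coeff_integ]
  have h : ((n + Finsupp.single i 1 : Fin 2 →₀ ℕ)) i = n i + 1 := by simp
  rw [if_neg (by omega), h, add_tsub_cancel_right]
  have : ((n i : ℝ) + 1) ≠ 0 := by positivity
  push_cast
  field_simp

lemma sub_add_comm' (i j : Fin 2) (hij : i ≠ j) (n : Fin 2 →₀ ℕ) :
    n + Finsupp.single j 1 - Finsupp.single i 1
      = n - Finsupp.single i 1 + Finsupp.single j 1 := by
  ext a
  simp only [Finsupp.tsub_apply, Finsupp.add_apply, Finsupp.single_apply]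
  split_ifs with h1 <;> omega

lemma pderiv_integ_ne (i j : Fin 2) (hij : i ≠ j) (p : MvPolynomial (Fin 2) ℝ) :
    pderiv j (integ i p) = integ i (pderiv j p) := by
  ext n
  rw [coeff_pderiv', coeff_integ, coeff_integ]
  have h1 : ((n + Finsupp.single j 1 : Fin 2 →₀ ℕ)) i = n i := by
    simp [Finsupp.single_apply_eq_zero, hij.symm]
  have h2 : ((n - Finsupp.single i 1 : Fin 2 →₀ ℕ)) j = n j := by
    rw [Finsupp.tsub_apply, Finsupp.single_apply, if_neg hij]
    simp
  rw [h1]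
  split_ifs with h
  · rw [mul_zero]
  · rw [coeff_pderiv', h2, sub_add_comm' i j hij]
    ring

lemma td_le_of_coeff_imp {p q : MvPolynomial (Fin 2) ℝ}
    (h : ∀ m, coeff m p ≠ 0 → coeff m q ≠ 0) : p.totalDegree ≤ q.totalDegree := by
  rw [totalDegree]
  apply Finset.sup_le
  intro m hm
  exact le_totalDegree (by rw [MvPolynomial.mem_support_iff]; exact h m (MvPolynomial.mem_support_iff.1 hm))

lemma td_integ (i : Fin 2) (p : MvPolynomial (Fin 2) ℝ) {d : ℕ} (hd : p.totalDegree ≤ d) :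
    (integ i p).totalDegree ≤ d + 1 := by
  refine (totalDegree_finset_sum _ _).trans (Finset.sup_le fun m hm => ?_)
  refine (totalDegree_monomial_le _ _).trans ?_
  have : ((m + Finsupp.single i 1 : Fin 2 →₀ ℕ)).sum (fun _ e => e)
      = m.sum (fun _ e => e) + 1 := by
    rw [Finsupp.sum_add_index (by simp) (by intros; rfl), Finsupp.sum_single_index rfl]
  calc ((m + Finsupp.single i 1 : Fin 2 →₀ ℕ)).sum (fun _ e => e)
      = m.sum (fun _ e => e) + 1 := this
    _ ≤ d + 1 := Nat.add_le_add_right ((le_totalDegree hm).trans hd) 1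

lemma td_pderiv (i : Fin 2) (p : MvPolynomial (Fin 2) ℝ) {d : ℕ} (hd : p.totalDegree ≤ d + 1) :
    (pderiv i p).totalDegree ≤ d := by
  rw [totalDegree]
  apply Finset.sup_le
  intro m hm
  have hc : coeff (m + Finsupp.single i 1) p ≠ 0 := by
    rw [MvPolynomial.mem_support_iff, coeff_pderiv'] at hm
    exact fun h => hm (by rw [h, mul_zero])
  have := le_totalDegree (MvPolynomial.mem_support_iff.2 hc)
  have hsum : ((m + Finsupp.single i 1 : Fin 2 →₀ ℕ)).sum (fun _ e => e)
      = m.sum (fun _ e => e) + 1 := by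
    rw [Finsupp.sum_add_index (by simp) (by intros; rfl), Finsupp.sum_single_index rfl]
  omega

lemma td_neg (p : MvPolynomial (Fin 2) ℝ) : (-p).totalDegree = p.totalDegree := by
  rw [totalDegree, totalDegree, support_neg]

lemma split_mixed (h : MvPolynomial (Fin 2) ℝ) (hmix : pderiv 0 (pderiv 1 h) = 0) :
    ∃ F G : MvPolynomial (Fin 2) ℝ, pderiv 1 F = 0 ∧ pderiv 0 G = 0 ∧ h = F + G ∧
      F.totalDegree ≤ h.totalDegree ∧ G.totalDegree ≤ h.totalDegree := by
  classical
  set F : MvPolynomial (Fin 2) ℝ :=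
    ∑ m ∈ h.support.filter (fun m => m 1 = 0), monomial m (coeff m h) with hF
  have hcF : ∀ n : Fin 2 →₀ ℕ, coeff n F = if n 1 = 0 then coeff n h else 0 := by
    intro n
    rw [hF, coeff_sum]
    simp_rw [coeff_monomial]
    rw [Finset.sum_ite_eq' _ n (fun m => coeff m h)]
    by_cases hn : n 1 = 0
    · rw [if_pos hn]
      by_cases hns : n ∈ h.support
      · rw [if_pos (Finset.mem_filter.2 ⟨hns, hn⟩)]
      · have hnot : n ∉ h.support.filter (fun m => m 1 = 0) :=
          fun hc => hns (Finset.mem_filter.1 hc).1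
        rw [if_neg hnot, MvPolynomial.notMem_support_iff.1 hns]
    · rw [if_neg hn]
      have hnot : n ∉ h.support.filter (fun m => m 1 = 0) :=
        fun hc => hn (Finset.mem_filter.1 hc).2
      exact if_neg hnot
  have hzero : ∀ m : Fin 2 →₀ ℕ, m 0 ≠ 0 → m 1 ≠ 0 → coeff m h = 0 := by
    intro m hm0 hm1
    have := (pderiv_eq_zero_iff' 0 (pderiv 1 h)).1 hmix (m - Finsupp.single 1 1)
      (by rw [Finsupp.tsub_apply, Finsupp.single_apply, if_neg (by decide)]; simpa)
    rw [coeff_pderiv', tsub_add_cancel_of_le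
      (by rwa [Finsupp.single_le_iff, Nat.one_le_iff_ne_zero])] at this
    have hne : (((m - Finsupp.single 1 1 : Fin 2 →₀ ℕ)) 1 : ℝ) + 1 ≠ 0 := by positivity
    exact (mul_eq_zero.1 this).resolve_left hne
  refine ⟨F, h - F, ?_, ?_, by ring, ?_, ?_⟩
  · rw [pderiv_eq_zero_iff']
    intro m hm
    rw [hcF, if_neg hm]
  · rw [pderiv_eq_zero_iff']
    intro m hm
    rw [coeff_sub, hcF]
    by_cases h1 : m 1 = 0
    · rw [if_pos h1, sub_self]
    · rw [if_neg h1, sub_zero, hzero m hm h1]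
  · apply td_le_of_coeff_imp
    intro m hm
    rw [hcF] at hm
    by_cases h1 : m 1 = 0
    · rwa [if_pos h1] at hm
    · rw [if_neg h1] at hm; exact absurd rfl hm
  · apply td_le_of_coeff_imp
    intro m hm
    rw [coeff_sub, hcF] at hm
    by_cases h1 : m 1 = 0
    · rw [if_pos h1, sub_self] at hm; exact absurd rfl hm
    · rwa [if_neg h1, sub_zero] at hm

lemma C_two_eq : (C (2:ℝ) : MvPolynomial (Fin 2) ℝ) = 2 :=
  map_ofNat (C : ℝ →+* MvPolynomial (Fin 2) ℝ) 2

lemma two_smul_eq_mul (z : MvPolynomial (Fin 2) ℝ) : (2:ℝ) • z = 2 * z := by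
  rw [smul_eq_C_mul, C_two_eq]

lemma integ_zero (i : Fin 2) : integ i (0 : MvPolynomial (Fin 2) ℝ) = 0 := by
  simp [integ]

/-- For `k ≥ 3`, the polynomial complex
`RT ⊂ P_{k+1}(K;ℝ²) →(sym curl) P_k(K;S) →(div div) P_{k−2}(K) → 0` is exact:
the kernel of `sym curl` in `P_{k+1}(K;ℝ²)` is the lowest-order Raviart–Thomas space
`RT`, the composition `div div ∘ sym curl` vanishes, `sym curl` maps `P_{k+1}(K;ℝ²)`
onto the kernel of `div div` in `P_k(K;S)`, and `div div` maps `P_k(K;S)` onto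
`P_{k−2}(K)`. Here `sym curl (p₁,p₂) = [[−∂ᵧp₁, (∂ₓp₁−∂ᵧp₂)/2], [(∂ₓp₁−∂ᵧp₂)/2, ∂ₓp₂]]`
and `div div (s₁₁,s₁₂,s₂₂) = ∂ₓₓs₁₁ + 2∂ₓᵧs₁₂ + ∂ᵧᵧs₂₂`. -/
theorem polynomial_divdiv_complex_exact (k : ℕ) (hk : 3 ≤ k) :
    (∀ p₁ p₂ : MvPolynomial (Fin 2) ℝ, p₁.totalDegree ≤ k + 1 → p₂.totalDegree ≤ k + 1 →
      ((-(pderiv 1 p₁) = 0 ∧ (1 / 2 : ℝ) • (pderiv 0 p₁ - pderiv 1 p₂) = 0 ∧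
          pderiv 0 p₂ = 0)
        ↔ ∃ a b c : ℝ, p₁ = C a + C c * X 0 ∧ p₂ = C b + C c * X 1)) ∧
    (∀ p₁ p₂ : MvPolynomial (Fin 2) ℝ,
      pderiv 0 (pderiv 0 (-(pderiv 1 p₁))) +
        2 * pderiv 0 (pderiv 1 ((1 / 2 : ℝ) • (pderiv 0 p₁ - pderiv 1 p₂))) +
        pderiv 1 (pderiv 1 (pderiv 0 p₂)) = 0) ∧
    (∀ s₁₁ s₁₂ s₂₂ : MvPolynomial (Fin 2) ℝ, s₁₁.totalDegree ≤ k → s₁₂.totalDegree ≤ k →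
      s₂₂.totalDegree ≤ k →
      pderiv 0 (pderiv 0 s₁₁) + 2 * pderiv 0 (pderiv 1 s₁₂) +
        pderiv 1 (pderiv 1 s₂₂) = 0 →
      ∃ p₁ p₂ : MvPolynomial (Fin 2) ℝ, p₁.totalDegree ≤ k + 1 ∧ p₂.totalDegree ≤ k + 1 ∧
        s₁₁ = -(pderiv 1 p₁) ∧ s₁₂ = (1 / 2 : ℝ) • (pderiv 0 p₁ - pderiv 1 p₂) ∧
        s₂₂ = pderiv 0 p₂) ∧
    (∀ q : MvPolynomial (Fin 2) ℝ, q.totalDegree ≤ k - 2 →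
      ∃ s₁₁ s₁₂ s₂₂ : MvPolynomial (Fin 2) ℝ, s₁₁.totalDegree ≤ k ∧ s₁₂.totalDegree ≤ k ∧
        s₂₂.totalDegree ≤ k ∧
        pderiv 0 (pderiv 0 s₁₁) + 2 * pderiv 0 (pderiv 1 s₁₂) +
          pderiv 1 (pderiv 1 s₂₂) = q) := by
  refine ⟨?_, ?_, ?_, ?_⟩
  · -- Part 1
    intro p₁ p₂ _ _
    constructor
    · rintro ⟨h1, h2, h3⟩
      rw [neg_eq_zero] at h1
      have hsub : pderiv 0 p₁ - pderiv 1 p₂ = 0 := by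
        have h2' : ((2:ℝ) * (1/2)) • (pderiv 0 p₁ - pderiv 1 p₂) = 0 := by
          rw [mul_smul, h2, smul_zero]
        norm_num at h2'
        exact h2'
      have hAB : pderiv 0 p₁ = pderiv 1 p₂ := sub_eq_zero.1 hsub
      have hq1 : pderiv 1 (pderiv 0 p₁) = 0 := by
        rw [pderiv_comm' 1 0, h1, map_zero]
      have hq0 : pderiv 0 (pderiv 0 p₁) = 0 := by
        rw [hAB, pderiv_comm' 0 1, h3, map_zero]
      set c := coeff 0 (pderiv 0 p₁) with hc
      have hqC : pderiv 0 p₁ = C c := eq_C_of_pderiv_zero _ hq0 hq1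
      have hr1_0 : pderiv 0 (p₁ - C c * X 0) = 0 := by
        rw [map_sub, pderiv_C_mul, pderiv_X_self, mul_one, hqC, sub_self]
      have hr1_1 : pderiv 1 (p₁ - C c * X 0) = 0 := by
        rw [map_sub, pderiv_C_mul, pderiv_X_of_ne (show (0:Fin 2) ≠ 1 by decide),
          mul_zero, h1, sub_zero]
      have hr2_1 : pderiv 1 (p₂ - C c * X 1) = 0 := by
        rw [map_sub, pderiv_C_mul, pderiv_X_self, mul_one, ← hAB, hqC, sub_self]
      have hr2_0 : pderiv 0 (p₂ - C c * X 1) = 0 := by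
        rw [map_sub, pderiv_C_mul, pderiv_X_of_ne (show (1:Fin 2) ≠ 0 by decide),
          mul_zero, h3, sub_zero]
      refine ⟨coeff 0 (p₁ - C c * X 0), coeff 0 (p₂ - C c * X 1), c, ?_, ?_⟩
      · have := eq_C_of_pderiv_zero _ hr1_0 hr1_1
        rw [← this]; ring
      · have := eq_C_of_pderiv_zero _ hr2_0 hr2_1
        rw [← this]; ring
    · rintro ⟨a, b, c, rfl, rfl⟩
      have e1 : pderiv (0:Fin 2) (C a + C c * X 0 : MvPolynomial (Fin 2) ℝ) = C c := by
        rw [map_add, pderiv_C, pderiv_C_mul, pderiv_X_self, mul_one, zero_add]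
      have e2 : pderiv (1:Fin 2) (C b + C c * X 1 : MvPolynomial (Fin 2) ℝ) = C c := by
        rw [map_add, pderiv_C, pderiv_C_mul, pderiv_X_self, mul_one, zero_add]
      refine ⟨?_, ?_, ?_⟩
      · rw [map_add, pderiv_C, pderiv_C_mul, pderiv_X_of_ne (show (0:Fin 2) ≠ 1 by decide),
          mul_zero, add_zero, neg_zero]
      · rw [e1, e2, sub_self, smul_zero]
      · rw [map_add, pderiv_C, pderiv_C_mul, pderiv_X_of_ne (show (1:Fin 2) ≠ 0 by decide),
          mul_zero, add_zero]
  · -- Part 2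
    intro p₁ p₂
    have hC2 : (C (1/2:ℝ) : MvPolynomial (Fin 2) ℝ) * 2 = 1 := by
      rw [← C_two_eq, ← C_mul]; norm_num
    have e : pderiv 0 (pderiv 1 ((1/2:ℝ) • (pderiv 0 p₁ - pderiv 1 p₂)))
        = C (1/2:ℝ) * (pderiv 0 (pderiv 1 (pderiv 0 p₁))
            - pderiv 0 (pderiv 1 (pderiv 1 p₂))) := by
      rw [smul_eq_C_mul, pderiv_C_mul, pderiv_C_mul, map_sub, map_sub]
    rw [e, pderiv_comm' 1 0 p₁, pderiv_comm' 1 0 p₂, pderiv_comm' 1 0 (pderiv 1 p₂),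
      map_neg, map_neg]
    linear_combination (pderiv 0 (pderiv 0 (pderiv 1 p₁))
      - pderiv 0 (pderiv 1 (pderiv 1 p₂))) * hC2
  · -- Part 3
    intro s₁₁ s₁₂ s₂₂ h11 h12 h22 hdiv
    have hk1 : k - 1 + 1 = k := by omega
    obtain ⟨u, hu1, hu01, hud, hu0d⟩ :
        ∃ u : MvPolynomial (Fin 2) ℝ, pderiv 1 u = -s₁₁ ∧
          pderiv 1 (pderiv 0 u) = -(pderiv 0 s₁₁) ∧
          u.totalDegree ≤ k + 1 ∧ (pderiv 0 u).totalDegree ≤ k := by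
      refine ⟨-(integ 1 s₁₁), ?_, ?_, ?_, ?_⟩
      · rw [map_neg, pderiv_integ]
      · rw [map_neg, pderiv_integ_ne 1 0 (by decide), map_neg, pderiv_integ]
      · rw [td_neg]; exact td_integ 1 s₁₁ h11
      · rw [map_neg, pderiv_integ_ne 1 0 (by decide), td_neg]
        rw [← hk1]; exact td_integ 1 _ (td_pderiv 0 s₁₁ (by rwa [hk1]))
    obtain ⟨v, hv0, hv11, hvd, hv1d⟩ :
        ∃ v : MvPolynomial (Fin 2) ℝ, pderiv 0 v = s₂₂ ∧
          pderiv 1 (pderiv 1 v) = integ 0 (pderiv 1 (pderiv 1 s₂₂)) ∧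
          v.totalDegree ≤ k + 1 ∧ (pderiv 1 v).totalDegree ≤ k := by
      refine ⟨integ 0 s₂₂, pderiv_integ 0 s₂₂, ?_, td_integ 0 s₂₂ h22, ?_⟩
      · rw [pderiv_integ_ne 0 1 (by decide), pderiv_integ_ne 0 1 (by decide)]
      · rw [pderiv_integ_ne 0 1 (by decide)]
        rw [← hk1]; exact td_integ 0 _ (td_pderiv 1 s₂₂ (by rwa [hk1]))
    have hmix : pderiv 0 (pderiv 1 ((2:ℝ) • s₁₂ - pderiv 0 u + pderiv 1 v)) = 0 := by
      rw [smul_eq_C_mul, map_add, map_sub, pderiv_C_mul, hu01, hv11,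
        map_add, map_sub, pderiv_C_mul, map_neg, pderiv_integ, C_two_eq]
      linear_combination hdiv
    obtain ⟨F, G, hF1, hG0, hFG, hFd, hGd⟩ := split_mixed _ hmix
    have hhd : ((2:ℝ) • s₁₂ - pderiv 0 u + pderiv 1 v).totalDegree ≤ k := by
      refine (totalDegree_add _ _).trans (max_le ?_ hv1d)
      rw [sub_eq_add_neg]
      refine (totalDegree_add _ _).trans (max_le ?_ ?_)
      · exact (totalDegree_smul_le _ _).trans h12
      · rw [td_neg]; exact hu0d
    refine ⟨u + integ 0 F, v + -(integ 1 G), ?_, ?_, ?_, ?_, ?_⟩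
    · exact (totalDegree_add _ _).trans (max_le hud (td_integ 0 F (hFd.trans hhd)))
    · refine (totalDegree_add _ _).trans (max_le hvd ?_)
      rw [td_neg]; exact td_integ 1 G (hGd.trans hhd)
    · rw [map_add, hu1, pderiv_integ_ne 0 1 (by decide), hF1, integ_zero, add_zero, neg_neg]
    · have hC2 : (C (1/2:ℝ) : MvPolynomial (Fin 2) ℝ) * 2 = 1 := by
        rw [← C_two_eq, ← C_mul]; norm_num
      rw [map_add, map_add, pderiv_integ, map_neg, pderiv_integ, smul_eq_C_mul]
      have hFG' : 2 * s₁₂ - pderiv 0 u + pderiv 1 v = F + G := by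
        rw [← two_smul_eq_mul]; exact hFG
      linear_combination (C (1/2:ℝ) : MvPolynomial (Fin 2) ℝ) * hFG' - s₁₂ * hC2
    · rw [map_add, hv0, map_neg, pderiv_integ_ne 1 0 (by decide), hG0, integ_zero,
        neg_zero, add_zero]
  · -- Part 4
    intro q hq
    refine ⟨integ 0 (integ 0 q), 0, 0, ?_, by simp, by simp, ?_⟩
    · have h2 := td_integ 0 (integ 0 q) (td_integ 0 q hq)
      have hkk : k - 2 + 1 + 1 = k := by omega
      rwa [hkk] at h2
    · rw [pderiv_integ, pderiv_integ]
      simp
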